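/- With V, R, V*, v_i^min, v_i^max as in the context: if V* = {v*} consists of a single point and v*_i ∈ {v_i^min, v_i^max} for both players i = 1, 2, then a valid utility remapping function ψ : V → R exists. -/

import Mathlib

namespace SPIs

/-- `Pareto x y` means `y` is a weak Pareto improvement on `x`, i.e. `y ⪰ x`. -/
def Pareto {n : ℕ} (x y : Fin n → ℝ) : Prop := ∀ i, x i ≤ y i

/-- `StrictPareto x y` means `y` is a strict Pareto improvement on `x`, i.e. `y ≻ x`. -/
def StrictPareto {n : ℕ} (x y : Fin n → ℝ) : Prop := Pareto x y ∧ ∃ i, x i < y i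

/-- An `n`-player normal-form game whose (finite, nonempty) action sets are drawn from the
fixed countably infinite universe `ℕ`. -/
structure Game (n : ℕ) where
  act : Fin n → Finset ℕ
  act_nonempty : ∀ i, (act i).Nonempty
  u : (Fin n → ℕ) → Fin n → ℝ

namespace Game

variable {n : ℕ}

/-- `a` is an outcome (action profile) of `G`. -/
def mem (G : Game n) (a : Fin n → ℕ) : Prop := ∀ i, a i ∈ G.act i

/-- Action `x` of Player `i` is strictly dominated (by some action `x'`) in `G`. -/
def Dominated (G : Game n) (i : Fin n) (x : ℕ) : Prop :=
  x ∈ G.act i ∧ ∃ x' ∈ G.act i, ∀ a : Fin n → ℕ, G.mem a →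
    G.u (Function.update a i x) i < G.u (Function.update a i x') i

/-- `G` contains no strictly dominated actions. -/
def FullyReduced (G : Game n) : Prop := ∀ i x, ¬ G.Dominated i x

/-- `G'` is obtained from `G` by removing a single strictly dominated action. -/
def RemoveStep (G G' : Game n) : Prop :=
  ∃ i x, G.Dominated i x ∧
    G'.act = Function.update G.act i ((G.act i).erase x) ∧ G'.u = G.u

/-- `H` is the reduced game `Ḡ` of `G`: it is obtained from `G` by iteratively removing
strictly dominated actions and itself has none left. -/
def IsReduction (G H : Game n) : Prop :=
  Relation.ReflTransGen RemoveStep G H ∧ H.FullyReduced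

/-- `φ` is a game isomorphism from `G` to `G'`. -/
def Iso (G G' : Game n) (φ : Fin n → ℕ → ℕ) : Prop :=
  (∀ i, Set.BijOn (φ i) (G.act i : Set ℕ) (G'.act i : Set ℕ)) ∧
  ∃ m b : Fin n → ℝ, (∀ i, 0 < m i) ∧
    ∀ a : Fin n → ℕ, G.mem a → ∀ i, G'.u (fun j => φ j (a j)) i = m i * G.u a i + b i

/-- The finite set of all action profiles of `G`. -/
def outcomes (G : Game n) : Finset (Fin n → ℕ) := Fintype.piFinset G.act

end Game

/-- A valid utility remapping function from the set `V` of payoff vectors into the set `R`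
of payoff vectors: it maps `V` into `R`, is weakly Pareto improving on `V`, strictly Pareto
improving somewhere on `V`, and entrywise positive affine on `V`. -/
def ValidRemap {n : ℕ} (V R : Set (Fin n → ℝ)) (ψ : (Fin n → ℝ) → Fin n → ℝ) : Prop :=
  (∀ v ∈ V, ψ v ∈ R) ∧ (∀ v ∈ V, Pareto v (ψ v)) ∧ (∃ v ∈ V, StrictPareto v (ψ v)) ∧
  (∀ i, ∃ m b : ℝ, 0 < m ∧ ∀ v ∈ V, ψ v i = m * v i + b)

/-- `V = u(Ā)`: the set of payoff vectors of the reduced game. -/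
def Vset (G Gb : Game 2) : Set (Fin 2 → ℝ) := G.u '' {a | Gb.mem a}

/-- `R = u(Δ(A))`: the convex hull of the set of payoff vectors of `G`. -/
def Rset (G : Game 2) : Set (Fin 2 → ℝ) := convexHull ℝ (G.u '' {a | G.mem a})

/-- `V*`: the set of points of `V` that cannot be strictly Pareto improved within `R`. -/
def VstarSet (G Gb : Game 2) : Set (Fin 2 → ℝ) :=
  {v ∈ Vset G Gb | ¬ ∃ r ∈ Rset G, StrictPareto v r}

/- ### Auxiliary lemmas -/

lemma fin2_cover {i j : Fin 2} (hij : i ≠ j) (k : Fin 2) : k = i ∨ k = j := by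
  fin_cases i <;> fin_cases j <;> fin_cases k <;> simp_all

lemma mem_of_removeStep {n : ℕ} {G G' : Game n} (h : Game.RemoveStep G G') :
    ∀ a, G'.mem a → G.mem a := by
  obtain ⟨i, x, _, hact, _⟩ := h
  intro a ha k
  have hk := ha k
  rw [hact] at hk
  rcases eq_or_ne k i with rfl | hne
  · rw [Function.update_self] at hk
    exact Finset.mem_of_mem_erase hk
  · rwa [Function.update_of_ne hne] at hk

lemma mem_of_reduction {n : ℕ} {G Gb : Game n}
    (h : Relation.ReflTransGen Game.RemoveStep G Gb) :
    ∀ a, Gb.mem a → G.mem a := by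
  induction h with
  | refl => exact fun a ha => ha
  | tail _ hstep ih => exact fun a ha => ih a (mem_of_removeStep hstep a ha)

/-- Case `v* = v^max`: contract halfway towards `v*`. -/
lemma caseA {V R : Set (Fin 2 → ℝ)} (hVR : V ⊆ R) (hconv : Convex ℝ R)
    (hV : V.Nontrivial) (p : Fin 2 → ℝ) (hp : p ∈ V)
    (hhigh : ∀ v ∈ V, ∀ k, v k ≤ p k) :
    ∃ ψ, ValidRemap V R ψ := by
  refine ⟨fun v k => (1/2 : ℝ) * v k + (1/2 : ℝ) * p k, ?_, ?_, ?_, ?_⟩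
  · intro v hv
    have h := hconv (hVR hv) (hVR hp) (by norm_num : (0:ℝ) ≤ 1/2)
      (by norm_num : (0:ℝ) ≤ 1/2) (by norm_num)
    refine Set.mem_of_eq_of_mem ?_ h
    funext k
    simp [smul_eq_mul]
  · intro v hv k
    have := hhigh v hv k
    dsimp only
    linarith
  · obtain ⟨x, hx, y, hy, hxy⟩ := hV
    have hex : ∃ v ∈ V, v ≠ p := by
      rcases eq_or_ne x p with rfl | h
      · exact ⟨y, hy, fun h' => hxy h'.symm⟩
      · exact ⟨x, hx, h⟩
    obtain ⟨v, hv, hvp⟩ := hex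
    have hk : ∃ k, v k < p k := by
      by_contra hc
      push_neg at hc
      exact hvp (funext fun k => le_antisymm (hhigh v hv k) (hc k))
    obtain ⟨k, hk⟩ := hk
    refine ⟨v, hv, fun k' => ?_, ⟨k, ?_⟩⟩
    · have := hhigh v hv k'; dsimp only; linarith
    · dsimp only; linarith
  · intro k
    exact ⟨1/2, (1/2 : ℝ) * p k, by norm_num, fun v _ => rfl⟩

/-- Case `v* = (v_i^min, v_j^max)`: compress coordinate `j` towards `v_j^max`. -/
lemma caseB {V R : Set (Fin 2 → ℝ)} (hVR : V ⊆ R) (hconv : Convex ℝ R)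
    (hVfin : V.Finite) (hV : V.Nontrivial) (p : Fin 2 → ℝ) (hp : p ∈ V)
    (hpundom : ¬ ∃ r ∈ R, StrictPareto p r)
    (hdom : ∀ v ∈ V, v ≠ p → ∃ r ∈ R, StrictPareto v r)
    (i j : Fin 2) (hij : i ≠ j)
    (hlow : ∀ v ∈ V, p i ≤ v i) (hhigh : ∀ v ∈ V, v j ≤ p j) :
    ∃ ψ, ValidRemap V R ψ := by
  classical
  -- every non-p point lies strictly below p in coordinate j
  have hkey : ∀ v ∈ V, v ≠ p → v j < p j := by
    intro v hv hvp
    rcases lt_or_eq_of_le (hhigh v hv) with h | h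
    · exact h
    exfalso
    have hvi : p i < v i := by
      rcases lt_or_eq_of_le (hlow v hv) with h' | h'
      · exact h'
      · exact absurd (funext fun k => by
          rcases fin2_cover hij k with hk | hk
          · rw [hk]; exact h'.symm
          · rw [hk]; exact h) hvp
    exact hpundom ⟨v, hVR hv, fun k => by
      rcases fin2_cover hij k with hk | hk
      · rw [hk]; exact le_of_lt hvi
      · rw [hk]; exact h.ge, ⟨i, hvi⟩⟩
  -- dominating points stay below p in coordinate j
  have hrkey : ∀ v ∈ V, ∀ r ∈ R, StrictPareto v r → r j ≤ p j := by
    intro v hv r hr hsp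
    by_contra hc
    push_neg at hc
    exact hpundom ⟨r, hr, fun k => by
      rcases fin2_cover hij k with hk | hk
      · rw [hk]; exact le_trans (hlow v hv) (hsp.1 i)
      · rw [hk]; exact le_of_lt hc, ⟨j, hc⟩⟩
  -- choice of dominators
  set rf : (Fin 2 → ℝ) → (Fin 2 → ℝ) := fun v =>
    if h : ∃ r ∈ R, StrictPareto v r then h.choose else v with hrf
  have hrf_spec : ∀ v ∈ V, v ≠ p → rf v ∈ R ∧ StrictPareto v (rf v) := by
    intro v hv hvp
    have h := hdom v hv hvp
    simp only [hrf, dif_pos h]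
    exact ⟨h.choose_spec.1, h.choose_spec.2⟩
  -- key sign lemma
  have hKlem : ∀ v ∈ V, v ≠ p → v i ≠ p i →
      (rf v i - p i) * (v j - p j) - (rf v j - p j) * (v i - p i) < 0 := by
    intro v hv hvp hvi
    obtain ⟨hrR, hsp⟩ := hrf_spec v hv hvp
    have hd1 : 0 < v i - p i := by
      rcases lt_or_eq_of_le (hlow v hv) with h | h
      · linarith
      · exact absurd h.symm hvi
    have hd2 : v j - p j < 0 := by have := hkey v hv hvp; linarith
    have he1 : v i - p i ≤ rf v i - p i := by have := hsp.1 i; linarith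
    have he2l : v j - p j ≤ rf v j - p j := by have := hsp.1 j; linarith
    have he2u : rf v j - p j ≤ 0 := by have := hrkey v hv (rf v) hrR hsp; linarith
    obtain ⟨k, hk⟩ := hsp.2
    rcases fin2_cover hij k with hk' | hk'
    · rw [hk'] at hk; nlinarith
    · rw [hk'] at hk; nlinarith
  -- thresholds
  set t : (Fin 2 → ℝ) → ℝ := fun v =>
    (rf v j - p j) * (v i - p i) / ((v j - p j) * (rf v i - p i)) with ht
  have ht_lt : ∀ v ∈ V, t v < 1 := by
    intro v hv
    simp only [ht]
    by_cases hvp : v = p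
    · have hrfp : rf p = p := by
        simp only [hrf]
        rw [dif_neg hpundom]
      rw [hvp, hrfp]
      simp
    by_cases h : v i = p i
    · rw [h]
      simp
    have hd1 : 0 < v i - p i := by
      rcases lt_or_eq_of_le (hlow v hv) with h' | h'
      · linarith
      · exact absurd h'.symm h
    obtain ⟨hrR, hsp⟩ := hrf_spec v hv hvp
    have hd2 : v j - p j < 0 := by have := hkey v hv hvp; linarith
    have he1 : 0 < rf v i - p i := by have := hsp.1 i; linarith
    have hden : (v j - p j) * (rf v i - p i) < 0 := mul_neg_of_neg_of_pos hd2 he1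
    rw [div_lt_iff_of_neg hden]
    have := hKlem v hv hvp h
    nlinarith
  -- uniform slope m
  set Tf : Finset ℝ := insert (1/2 : ℝ) (hVfin.image t).toFinset with hTf
  have hTne : Tf.Nonempty := ⟨1/2, Finset.mem_insert_self _ _⟩
  set M : ℝ := Tf.max' hTne with hM
  set m : ℝ := (1 + M) / 2 with hm
  have hMhalf : (1/2 : ℝ) ≤ M := Finset.le_max' _ _ (Finset.mem_insert_self _ _)
  have hMlt : M < 1 := by
    rw [hM, Finset.max'_lt_iff]
    intro b hb
    rw [hTf, Finset.mem_insert] at hb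
    rcases hb with rfl | hb
    · norm_num
    · rw [Set.Finite.mem_toFinset] at hb
      obtain ⟨v, hv, rfl⟩ := hb
      exact ht_lt v hv
  have hm0 : 0 < m := by rw [hm]; linarith
  have hm1 : m < 1 := by rw [hm]; linarith
  have hmt : ∀ v ∈ V, t v < m := by
    intro v hv
    have h1 : t v ≤ M := Finset.le_max' _ _ (by
      rw [hTf, Finset.mem_insert]
      right
      rw [Set.Finite.mem_toFinset]
      exact ⟨v, hv, rfl⟩)
    rw [hm]; linarith
  -- the remapping
  refine ⟨fun v k => if k = j then m * v k + (1 - m) * p j else v k, ?_, ?_, ?_, ?_⟩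
  · -- membership in R
    intro v hv
    by_cases hvp : v = p
    · refine Set.mem_of_eq_of_mem ?_ (hVR hp)
      funext k
      show (if k = j then m * v k + (1 - m) * p j else v k) = p k
      rw [hvp]
      split_ifs with hk
      · rw [hk]; ring
      · rfl
    obtain ⟨hrR, hsp⟩ := hrf_spec v hv hvp
    rcases eq_or_ne (v i) (p i) with hdo | hdo
    · -- segment between v and p
      have h : m • v + (1 - m) • p ∈ R :=
        hconv (hVR hv) (hVR hp) (le_of_lt hm0) (by linarith) (by ring)
      refine Set.mem_of_eq_of_mem ?_ h
      funext k
      show (if k = j then m * v k + (1 - m) * p j else v k) = (m • v + (1 - m) • p) k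
      rcases fin2_cover hij k with hk | hk
      · rw [hk, if_neg hij]
        show v i = m * v i + (1 - m) * p i
        rw [hdo]; ring
      · rw [hk, if_pos rfl]
        show m * v j + (1 - m) * p j = m * v j + (1 - m) * p j
        rfl
    · -- convex combination of p, v and rf v
      have hd1 : 0 < v i - p i := by
        rcases lt_or_eq_of_le (hlow v hv) with h' | h'
        · linarith
        · exact absurd h'.symm hdo
      have hd2 : v j - p j < 0 := by have := hkey v hv hvp; linarith
      have he1 : v i - p i ≤ rf v i - p i := by have := hsp.1 i; linarith
      have he2u : rf v j - p j ≤ 0 := by have := hrkey v hv (rf v) hrR hsp; linarith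
      have hK : (rf v i - p i) * (v j - p j) - (rf v j - p j) * (v i - p i) < 0 :=
        hKlem v hv hvp hdo
      have hKne : (rf v i - p i) * (v j - p j) - (rf v j - p j) * (v i - p i) ≠ 0 :=
        ne_of_lt hK
      set α : ℝ := (1 - m) * ((rf v i - p i) - (v i - p i)) * (v j - p j) /
        ((rf v i - p i) * (v j - p j) - (rf v j - p j) * (v i - p i)) with hα
      set β : ℝ := m - (1 - m) * (v i - p i) * (rf v j - p j) /
        ((rf v i - p i) * (v j - p j) - (rf v j - p j) * (v i - p i)) with hβ
      set γ : ℝ := (1 - m) * (v i - p i) * (v j - p j) /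
        ((rf v i - p i) * (v j - p j) - (rf v j - p j) * (v i - p i)) with hγ
      have hα0 : 0 ≤ α := by
        rw [hα, div_nonneg_iff]
        right
        constructor
        · nlinarith [mul_nonneg (mul_nonneg (by linarith : (0:ℝ) ≤ 1 - m)
            (by linarith : (0:ℝ) ≤ (rf v i - p i) - (v i - p i)))
            (by linarith : (0:ℝ) ≤ -(v j - p j))]
        · linarith
      have hγ0 : 0 ≤ γ := by
        rw [hγ, div_nonneg_iff]
        right
        constructor
        · nlinarith [mul_nonneg (mul_nonneg (by linarith : (0:ℝ) ≤ 1 - m)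
            (by linarith : (0:ℝ) ≤ v i - p i))
            (by linarith : (0:ℝ) ≤ -(v j - p j))]
        · linarith
      have hβ0 : 0 ≤ β := by
        have htv := hmt v hv
        simp only [ht] at htv
        have hden : (v j - p j) * (rf v i - p i) < 0 := by nlinarith
        rw [div_lt_iff_of_neg hden] at htv
        rw [hβ, sub_nonneg, div_le_iff_of_neg hK]
        nlinarith
      have hsum : α + β + γ = 1 := by
        rw [hα, hβ, hγ]
        set D := ((rf v i - p i) * (v j - p j) - (rf v j - p j) * (v i - p i)) with hD
        field_simp
        rw [hD]
        ring
      have hmem : (∑ k : Fin 3, ![α, β, γ] k • ![p, v, rf v] k) ∈ R := by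
        apply hconv.sum_mem
        · intro k _
          fin_cases k
          · simpa using hα0
          · simpa using hβ0
          · simpa using hγ0
        · rw [Fin.sum_univ_three]
          simpa using hsum
        · intro k _
          fin_cases k
          · simpa using hVR hp
          · simpa using hVR hv
          · simpa using hrR
      rw [Fin.sum_univ_three] at hmem
      simp only [Matrix.cons_val_zero, Matrix.cons_val_one, Matrix.head_cons,
        Matrix.cons_val_two, Matrix.tail_cons] at hmem
      refine Set.mem_of_eq_of_mem ?_ hmem
      funext k
      show (if k = j then m * v k + (1 - m) * p j else v k)
          = (α • p + β • v + γ • rf v) k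
      rcases fin2_cover hij k with hk | hk
      · rw [hk, if_neg hij]
        show v i = α * p i + β * v i + γ * rf v i
        rw [hα, hβ, hγ]
        set D := ((rf v i - p i) * (v j - p j) - (rf v j - p j) * (v i - p i)) with hD
        field_simp
        rw [hD]
        ring
      · rw [hk, if_pos rfl]
        show m * v j + (1 - m) * p j = α * p j + β * v j + γ * rf v j
        rw [hα, hβ, hγ]
        set D := ((rf v i - p i) * (v j - p j) - (rf v j - p j) * (v i - p i)) with hD
        field_simp
        rw [hD]
        ring
  · -- weak Pareto improvement
    intro v hv k
    show v k ≤ (if k = j then m * v k + (1 - m) * p j else v k)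
    split_ifs with hk
    · subst hk
      have := hhigh v hv
      nlinarith
    · exact le_refl _
  · -- strict Pareto improvement somewhere
    obtain ⟨x, hx, y, hy, hxy⟩ := hV
    have hex : ∃ v ∈ V, v ≠ p := by
      rcases eq_or_ne x p with rfl | h
      · exact ⟨y, hy, fun h' => hxy h'.symm⟩
      · exact ⟨x, hx, h⟩
    obtain ⟨v, hv, hvp⟩ := hex
    have hj := hkey v hv hvp
    refine ⟨v, hv, fun k => ?_, ⟨j, ?_⟩⟩
    · show v k ≤ (if k = j then m * v k + (1 - m) * p j else v k)
      split_ifs with hk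
      · subst hk
        have := hhigh v hv
        nlinarith
      · exact le_refl _
    · show v j < (if j = j then m * v j + (1 - m) * p j else v j)
      rw [if_pos rfl]
      nlinarith
  · -- entrywise positive affine
    intro k
    rcases fin2_cover hij k with hk | hk
    · refine ⟨1, 0, one_pos, fun v _ => ?_⟩
      rw [hk]
      show (if i = j then m * v i + (1 - m) * p j else v i) = 1 * v i + 0
      rw [if_neg hij]
      ring
    · refine ⟨m, (1 - m) * p j, hm0, fun v _ => ?_⟩
      rw [hk]
      show (if j = j then m * v j + (1 - m) * p j else v j) = m * v j + (1 - m) * p j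
      rw [if_pos rfl]

/-- Case 2(a) of Theorem 4 of the paper. -/
theorem correlated_token_spi_case_both_extremal (G Gb : Game 2)
    (hred : Game.IsReduction G Gb)
    (hV : (Vset G Gb).Nontrivial)
    (vstar vmin vmax : Fin 2 → ℝ)
    (hmin : ∀ i, IsLeast ((fun v => v i) '' Vset G Gb) (vmin i))
    (hmax : ∀ i, IsGreatest ((fun v => v i) '' Vset G Gb) (vmax i))
    (hstar : VstarSet G Gb = {vstar})
    (hext : ∀ i, vstar i = vmin i ∨ vstar i = vmax i) :
    ∃ ψ : (Fin 2 → ℝ) → Fin 2 → ℝ, ValidRemap (Vset G Gb) (Rset G) ψ := by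
  classical
  have hVR : Vset G Gb ⊆ Rset G := by
    intro v hv
    apply subset_convexHull ℝ _
    obtain ⟨a, ha, rfl⟩ := hv
    exact ⟨a, mem_of_reduction hred.1 a ha, rfl⟩
  have hconv : Convex ℝ (Rset G) := convex_convexHull ℝ _
  have hVfin : (Vset G Gb).Finite := by
    have hset : {a | Gb.mem a} = ↑Gb.outcomes := by
      ext a
      simp [Game.outcomes, Game.mem, Fintype.mem_piFinset]
    unfold Vset
    rw [hset]
    exact Gb.outcomes.finite_toSet.image _
  have hpstar : vstar ∈ VstarSet G Gb := by rw [hstar]; exact rfl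
  have hpV : vstar ∈ Vset G Gb := hpstar.1
  have hpundom : ¬ ∃ r ∈ Rset G, StrictPareto vstar r := hpstar.2
  have hdom : ∀ v ∈ Vset G Gb, v ≠ vstar → ∃ r ∈ Rset G, StrictPareto v r := by
    intro v hv hne
    by_contra hc
    have hmem : v ∈ VstarSet G Gb := ⟨hv, hc⟩
    rw [hstar] at hmem
    exact hne hmem
  have hlowb : ∀ k, ∀ v ∈ Vset G Gb, vmin k ≤ v k := fun k v hv => (hmin k).2 ⟨v, hv, rfl⟩
  have hhighb : ∀ k, ∀ v ∈ Vset G Gb, v k ≤ vmax k := fun k v hv => (hmax k).2 ⟨v, hv, rfl⟩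
  by_cases hA : ∀ k, vstar k = vmax k
  · exact caseA hVR hconv hV vstar hpV (fun v hv k => (hA k) ▸ hhighb k v hv)
  · push_neg at hA
    obtain ⟨i, hi⟩ := hA
    have hi' : vstar i = vmin i := (hext i).resolve_right hi
    have hexj : ∃ j : Fin 2, i ≠ j := by
      fin_cases i
      · exact ⟨1, by decide⟩
      · exact ⟨0, by decide⟩
    obtain ⟨j, hij⟩ := hexj
    obtain ⟨w, hw, hwi⟩ := (hmax i).1
    have hminmax : vmin i < vmax i := by
      have h1 : vmin i ≤ w i := hlowb i w hw
      have h2 : (fun v => v i) w = vmax i := hwi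
      have h3 : vmin i ≤ vmax i := by rw [← h2]; exact h1
      rcases lt_or_eq_of_le h3 with h | h
      · exact h
      · exact absurd (hi'.trans h) hi
  -- vstar must be maximal in coordinate j
    have hj2 : vstar j = vmax j := by
      rcases hext j with hj' | hj'
      · exfalso
        apply hpundom
        refine ⟨w, hVR hw, fun k => ?_, ⟨i, ?_⟩⟩
        · rcases fin2_cover hij k with hk | hk
          · rw [hk, hi']; exact hlowb i w hw
          · rw [hk, hj']; exact hlowb j w hw
        · rw [hi']
          have h2 : (fun v => v i) w = vmax i := hwi
          rw [show w i = vmax i from h2]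
          exact hminmax
      · exact hj'
    exact caseB hVR hconv hVfin hV vstar hpV hpundom hdom i j hij
      (fun v hv => hi' ▸ hlowb i v hv) (fun v hv => hj2 ▸ hhighb j v hv)

end SPIs
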